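/- arXiv:2410.23380 — 3 statements merged into one kernel-verified Lean document; each statement's English description precedes it below -/
import Mathlib

section
/- Let W := ∏_{k=1}^{6} exp(−(iπ/24)·(3·Z₀Z_kZ_{k+1} − Z₀ − Z_k − Z_{k+1})) (the six factors pairwise commute, being functions of the commuting operators Z₀,…,Z₆). Then W · X₀ · W* = B, i.e. conjugating the Pauli X on the central qubit by the inverse Levin–Gu entangling circuit on the hexagon produces the Levin–Gu plaquette operator B = −X₀·∏_{k=1}^{6} i^{(1 − Z_kZ_{k+1})/2}. -/
open Complex Matrix

noncomputable section

/-- The operator acting as the 2×2 matrix `M` on the qubit at site `j` of a finite qubit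
system and as the identity on all other sites. -/
def localOp {S : Type*} [Fintype S] [DecidableEq S] (j : S)
    (M : Matrix (Fin 2) (Fin 2) ℂ) :
    Matrix (S → Fin 2) (S → Fin 2) ℂ :=
  Matrix.of fun f g => if ∀ k, k ≠ j → f k = g k then M (f j) (g j) else 0

/-- The Pauli `X` matrix. -/
def PX : Matrix (Fin 2) (Fin 2) ℂ := !![0, 1; 1, 0]

/-- The Pauli `Z` matrix. -/
def PZ : Matrix (Fin 2) (Fin 2) ℂ := !![1, 0; 0, -1]

/-- Operators on the seven qubits of a hexagon of the triangular lattice: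
qubit `0` is the center and qubits `1,…,6` are its neighbors in cyclic order. -/
abbrev HexOp := Matrix (Fin 7 → Fin 2) (Fin 7 → Fin 2) ℂ

/-- Pauli `X` on qubit `j`. -/
def Xh (j : Fin 7) : HexOp := localOp j PX

/-- Pauli `Z` on qubit `j`. -/
def Zh (j : Fin 7) : HexOp := localOp j PZ

/-- The `k`-th neighboring qubit, `k = 1,…,6`. -/
def nb (k : Fin 6) : Fin 7 := ⟨k.val + 1, by omega⟩

/-- The cyclic successor of the `k`-th neighboring qubit (indices mod 6, `7 ↦ 1`). -/
def nb' (k : Fin 6) : Fin 7 := ⟨(k.val + 1) % 6 + 1, by omega⟩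

/-- `i^M := exp (I π M / 2)` for a (self-adjoint) operator `M`. -/
def iPow (M : HexOp) : HexOp :=
  NormedSpace.exp (((Real.pi : ℂ) * Complex.I / 2) • M)

/-- The Levin–Gu plaquette operator
`B := −X₀·∏_{k=1}^{6} i^{(1 − Z_k Z_{k+1})/2}`. -/
def LGB : HexOp :=
  -(Xh 0 * ((List.finRange 6).map fun k =>
      iPow (((2 : ℂ)⁻¹) • ((1 : HexOp) - Zh (nb k) * Zh (nb' k)))).prod)

/-- The inverse Levin–Gu entangling circuit on the hexagon
`W := ∏_{k=1}^{6} exp(−(iπ/24)·(3·Z₀Z_kZ_{k+1} − Z₀ − Z_k − Z_{k+1}))`. -/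
def LGW : HexOp :=
  ((List.finRange 6).map fun k =>
    NormedSpace.exp ((-((Real.pi : ℂ) * Complex.I / 24)) •
      ((3 : ℂ) • (Zh 0 * Zh (nb k) * Zh (nb' k)) - Zh 0 - Zh (nb k) - Zh (nb' k)))).prod

/- ======================= auxiliary machinery ======================= -/

/-- Integer-valued eigenvalue function of `Z` at site `j`. -/
def zi (j : Fin 7) (f : Fin 7 → Fin 2) : ℤ := if f j = 0 then 1 else -1

/-- Complex-valued eigenvalue function of `Z` at site `j`. -/
def zf (j : Fin 7) (f : Fin 7 → Fin 2) : ℂ := (zi j f : ℂ)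

lemma fin2_cases (a : Fin 2) : a = 0 ∨ a = 1 := by omega

lemma Zh_eq (j : Fin 7) : Zh j = Matrix.diagonal (zf j) := by
  ext f g
  simp only [Zh, localOp, Matrix.of_apply, Matrix.diagonal_apply, zf, zi]
  by_cases h : f = g
  · subst h
    simp only [if_pos (fun k _ => rfl), if_pos rfl]
    rcases fin2_cases (f j) with h2 | h2 <;> simp [h2, PZ]
  · rw [if_neg h]
    by_cases h2 : ∀ k, k ≠ j → f k = g k
    · rw [if_pos h2]
      have hj : f j ≠ g j := by
        intro hj
        apply h
        funext k
        by_cases hk : k = j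
        · rw [hk]; exact hj
        · exact h2 k hk
      rcases fin2_cases (f j) with h3 | h3 <;> rcases fin2_cases (g j) with h4 | h4 <;>
        simp_all [PZ]
    · rw [if_neg h2]

lemma exp_diag (v : (Fin 7 → Fin 2) → ℂ) :
    NormedSpace.exp (Matrix.diagonal v) = Matrix.diagonal fun f => Complex.exp (v f) := by
  rw [Matrix.exp_diagonal]
  congr 1
  funext f
  rw [Pi.exp_def, Complex.exp_eq_exp_ℂ]

lemma list_prod_diag (l : List (Fin 6)) (w : Fin 6 → (Fin 7 → Fin 2) → ℂ) :
    (l.map fun k => Matrix.diagonal (w k)).prod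
      = Matrix.diagonal (fun f => (l.map fun k => w k f).prod) := by
  induction l with
  | nil => simp
  | cons a t ih => simp [ih, Matrix.diagonal_mul_diagonal]

/-- The diagonal exponent of a `W`-factor. -/
def eW (k : Fin 6) (f : Fin 7 → Fin 2) : ℂ :=
  (-((Real.pi : ℂ) * Complex.I / 24)) *
    ((3 : ℂ) * (zf 0 f * zf (nb k) f * zf (nb' k) f) - zf 0 f - zf (nb k) f - zf (nb' k) f)

/-- The diagonal exponent of a `B`-factor. -/
def eB (k : Fin 6) (f : Fin 7 → Fin 2) : ℂ :=
  ((Real.pi : ℂ) * Complex.I / 2) * ((2 : ℂ)⁻¹ * (1 - zf (nb k) f * zf (nb' k) f))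

lemma W_factor (k : Fin 6) :
    NormedSpace.exp ((-((Real.pi : ℂ) * Complex.I / 24)) •
      ((3 : ℂ) • (Zh 0 * Zh (nb k) * Zh (nb' k)) - Zh 0 - Zh (nb k) - Zh (nb' k)))
      = Matrix.diagonal fun f => Complex.exp (eW k f) := by
  rw [Zh_eq 0, Zh_eq (nb k), Zh_eq (nb' k), Matrix.diagonal_mul_diagonal,
    Matrix.diagonal_mul_diagonal, ← Matrix.diagonal_smul, Matrix.diagonal_sub,
    Matrix.diagonal_sub, Matrix.diagonal_sub, ← Matrix.diagonal_smul, exp_diag]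
  congr 1

lemma B_factor (k : Fin 6) :
    iPow (((2 : ℂ)⁻¹) • ((1 : HexOp) - Zh (nb k) * Zh (nb' k)))
      = Matrix.diagonal fun f => Complex.exp (eB k f) := by
  rw [iPow, Zh_eq (nb k), Zh_eq (nb' k), Matrix.diagonal_mul_diagonal,
    ← Matrix.diagonal_one, Matrix.diagonal_sub, ← Matrix.diagonal_smul,
    ← Matrix.diagonal_smul, exp_diag]
  congr 1

lemma LGW_eq : LGW = Matrix.diagonal fun f =>
    ((List.finRange 6).map fun k => Complex.exp (eW k f)).prod := by
  unfold LGW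
  simp only [W_factor]
  rw [list_prod_diag]

lemma LGB_eq : LGB = -(Xh 0 * Matrix.diagonal fun f =>
    ((List.finRange 6).map fun k => Complex.exp (eB k f)).prod) := by
  unfold LGB
  simp only [B_factor]
  rw [list_prod_diag]

lemma exp_odd (n : ℤ) (hn : n % 2 = 1) : Complex.exp ((Real.pi : ℂ) * I * n) = -1 := by
  rw [mul_comm, Complex.exp_int_mul, Complex.exp_pi_mul_I]
  exact Odd.neg_one_zpow (Int.odd_iff.mpr hn)

lemma exp_shift {x y : ℂ} (n : ℤ) (hn : n % 2 = 1)
    (h : x = y + (Real.pi : ℂ) * I * n) : Complex.exp x = -Complex.exp y := by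
  rw [h, Complex.exp_add, exp_odd n hn]; ring

lemma prod_exp (l : List (Fin 6)) (e : Fin 6 → ℂ) :
    (l.map fun k => Complex.exp (e k)).prod = Complex.exp ((l.map e).sum) := by
  rw [Complex.exp_list_sum, List.map_map]; rfl

lemma hfr : List.finRange 6 = [0, 1, 2, 3, 4, 5] := by decide

/-- The cyclic correlation sum, as an integer. -/
def Sz (f : Fin 7 → Fin 2) : ℤ :=
  ((List.finRange 6).map fun k => zi (nb k) f * zi (nb' k) f).sum

set_option maxRecDepth 100000 in
lemma Sz_mod (f : Fin 7 → Fin 2) : Sz f % 4 = 2 := by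
  revert f; decide

lemma zf_def (j : Fin 7) (f : Fin 7 → Fin 2) : ((zi j f : ℤ) : ℂ) = zf j f := rfl

lemma conj_zf (j : Fin 7) (f : Fin 7 → Fin 2) :
    (starRingEnd ℂ) (zf j f) = zf j f :=
  map_intCast _ _

set_option maxHeartbeats 2000000 in
/-- The key scalar identity. -/
lemma scalar (f g : Fin 7 → Fin 2) (hc : ∀ k, k ≠ 0 → f k = g k) (h0 : f 0 ≠ g 0) :
    (((List.finRange 6).map fun k => Complex.exp (eW k f)).prod) *
      (starRingEnd ℂ) (((List.finRange 6).map fun k => Complex.exp (eW k g)).prod)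
      = -(((List.finRange 6).map fun k => Complex.exp (eB k g)).prod) := by
  have hnb : ∀ k : Fin 6, zf (nb k) g = zf (nb k) f := by
    intro k
    have : f (nb k) = g (nb k) := hc _ (by revert k; decide)
    simp [zf, zi, this]
  have hnb' : ∀ k : Fin 6, zf (nb' k) g = zf (nb' k) f := by
    intro k
    have : f (nb' k) = g (nb' k) := hc _ (by revert k; decide)
    simp [zf, zi, this]
  rw [prod_exp, prod_exp, prod_exp, ← Complex.exp_conj, ← Complex.exp_add]
  rcases fin2_cases (f 0) with h | h <;> rcases fin2_cases (g 0) with h' | h' <;>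
    [skip; skip; skip; skip]
  · exact absurd (h.trans h'.symm) h0
  · -- f 0 = 0 (z0 = 1), g 0 = 1
    have hz0f : zf 0 f = 1 := by simp [zf, zi, h]
    have hz0g : zf 0 g = -1 := by simp [zf, zi, h']
    refine exp_shift (-1) (by decide) ?_
    rw [hfr]
    simp only [List.map_cons, List.map_nil, List.sum_cons, List.sum_nil, add_zero, eW, eB]
    simp only [map_add, map_sub, _root_.map_mul, map_neg, map_div₀, map_ofNat, Complex.conj_I,
      Complex.conj_ofReal, conj_zf]
    simp only [hnb, hnb', hz0f, hz0g]
    push_cast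
    ring
  · -- f 0 = 1 (z0 = -1), g 0 = 0
    have hz0f : zf 0 f = -1 := by simp [zf, zi, h]
    have hz0g : zf 0 g = 1 := by simp [zf, zi, h']
    obtain ⟨m, hm⟩ : ∃ m : ℤ, Sz f = 4 * m + 2 :=
      ⟨(Sz f - 2) / 4, by have := Sz_mod f; omega⟩
    have hsum : ((Sz f : ℤ) : ℂ) = 4 * (m : ℂ) + 2 := by rw [hm]; push_cast; ring
    rw [Sz, hfr] at hsum
    simp only [List.map_cons, List.map_nil, List.sum_cons, List.sum_nil, add_zero,
      Int.cast_add, Int.cast_mul] at hsum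
    simp only [zf_def] at hsum
    refine exp_shift (2 * m - 1) (by omega) ?_
    rw [hfr]
    simp only [List.map_cons, List.map_nil, List.sum_cons, List.sum_nil, add_zero, eW, eB]
    simp only [map_add, map_sub, _root_.map_mul, map_neg, map_div₀, map_ofNat, Complex.conj_I,
      Complex.conj_ofReal, conj_zf]
    simp only [hnb, hnb', hz0f, hz0g]
    push_cast
    linear_combination ((Real.pi : ℂ) * I / 2) * hsum
  · exact absurd (h.trans h'.symm) h0

/-- Conjugating the Pauli `X` on the central qubit by the inverse Levin–Gu
entangling circuit on the hexagon produces the Levin–Gu plaquette operator: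
`W · X₀ · W* = B`. -/
theorem levin_gu_entangler_conjugates_X_to_B : LGW * Xh 0 * LGWᴴ = LGB := by
  rw [LGW_eq, LGB_eq, Matrix.diagonal_conjTranspose]
  ext f g
  simp only [Matrix.mul_diagonal, Matrix.diagonal_mul, Matrix.neg_apply, Pi.star_apply]
  rw [Complex.star_def]
  simp only [Xh, localOp, Matrix.of_apply]
  by_cases hcond : ∀ k, k ≠ (0 : Fin 7) → f k = g k
  · rw [if_pos hcond]
    by_cases h0 : f 0 = g 0
    · have hPX : PX (f 0) (g 0) = 0 := by
        rw [h0]; rcases fin2_cases (g 0) with h | h <;> simp [h, PX]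
      rw [hPX]; ring
    · have hPX : PX (f 0) (g 0) = 1 := by
        rcases fin2_cases (f 0) with h | h <;> rcases fin2_cases (g 0) with h' | h' <;>
          simp_all [PX]
      rw [hPX]
      have := scalar f g hcond h0
      linear_combination this
  · rw [if_neg hcond]; ring


end
end

section
/- For any subset S ⊆ {0,1,…,6}, conjugating the Levin–Gu plaquette operator by the partial spin-flip on S gives (∏_{j∈S} X_j) · B · (∏_{j∈S} X_j) = B · ∏_{k∈E_S} exp(iπ·Z_kZ_{k+1}/2), where E_S := { k ∈ {1,…,6} : exactly one of k, k+1 (indices mod 6 in {1,…,6}) lies in S }. In particular, a spin-flip restricted to one side of a cut through the hexagon decorates B by the product of the operators i^{Z_kZ_{k+1}} = exp(iπZ_kZ_{k+1}/2) over the boundary edges of the flipped region. -/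
open Complex Matrix

noncomputable section

/-- The partial spin-flip `∏_{j∈S} X_j` on a subset `S` of the seven qubits. -/
def partialFlip (S : Finset (Fin 7)) : HexOp :=
  (((List.finRange 7).filter (fun j => j ∈ S)).map Xh).prod

/-- The edges `k ∈ {1,…,6}` of the hexagon boundary having exactly one endpoint in `S`
(the boundary edges of the flipped region). -/
def bdryEdges (S : Finset (Fin 7)) : List (Fin 6) :=
  (List.finRange 6).filter fun k =>
    (nb k ∈ S ∧ nb' k ∉ S) ∨ (nb' k ∈ S ∧ nb k ∉ S)

namespace LGAux

/-! ### Scalar spectrum of `PZ` and permutation form of `PX` -/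

def zf : Fin 2 → ℂ := ![1, -1]

lemma PZ_apply (a b : Fin 2) : PZ a b = if a = b then zf a else 0 := by
  fin_cases a <;> fin_cases b <;> simp [PZ, zf]

lemma PX_apply (a b : Fin 2) : PX a b = if b = a + 1 then 1 else 0 := by
  fin_cases a <;> fin_cases b <;> simp [PX]

lemma zf_add_one (x : Fin 2) : zf (x + 1) = - zf x := by
  fin_cases x <;> simp [zf]

lemma Zh_eq (j : Fin 7) : Zh j = Matrix.diagonal (fun f => zf (f j)) := by
  ext f g
  simp only [Zh, localOp, Matrix.of_apply, Matrix.diagonal_apply]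
  by_cases hfg : ∀ k, k ≠ j → f k = g k
  · rw [if_pos hfg, PZ_apply]
    by_cases h : f j = g j
    · have hfg2 : f = g := funext fun k => by
        by_cases hk : k = j
        · subst hk; exact h
        · exact hfg k hk
      simp [h, hfg2]
    · have hfg2 : f ≠ g := fun e => h (by rw [e])
      simp [h, hfg2]
  · rw [if_neg hfg]
    have hfg2 : f ≠ g := fun e => hfg fun k _ => by rw [e]
    simp [hfg2]

def flipOne (a : Fin 7) (f : Fin 7 → Fin 2) : Fin 7 → Fin 2 :=
  fun j => if j = a then f j + 1 else f j

lemma flipOne_invol (a : Fin 7) (f : Fin 7 → Fin 2) : flipOne a (flipOne a f) = f := by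
  have h2 : ∀ x : Fin 2, x + 1 + 1 = x := by decide
  funext j
  simp only [flipOne]
  split <;> simp [h2]

lemma Xh_eq (a : Fin 7) :
    Xh a = Matrix.of fun f g => if g = flipOne a f then 1 else 0 := by
  ext f g
  simp only [Xh, localOp, Matrix.of_apply]
  by_cases hfg : ∀ k, k ≠ a → f k = g k
  · rw [if_pos hfg, PX_apply]
    by_cases h : g a = f a + 1
    · have e : g = flipOne a f := funext fun k => by
        by_cases hk : k = a
        · subst hk; simpa [flipOne] using h
        · simp [flipOne, hk, (hfg k hk).symm]
      simp [h, e, flipOne]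
    · have e : g ≠ flipOne a f := fun e => h (by rw [e]; simp [flipOne])
      simp [h, e]
  · rw [if_neg hfg]
    have e : g ≠ flipOne a f := fun e => hfg fun k hk => by
      rw [e]; simp [flipOne, hk]
    simp [e]

lemma Xh_mul (a : Fin 7) (M : HexOp) :
    Xh a * M = Matrix.of fun f g => M (flipOne a f) g := by
  ext f g
  rw [Matrix.mul_apply]
  simp only [Xh_eq, Matrix.of_apply, ite_mul, one_mul, zero_mul]
  simp

lemma mul_Xh (a : Fin 7) (M : HexOp) :
    M * Xh a = Matrix.of fun f g => M f (flipOne a g) := by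
  ext f g
  rw [Matrix.mul_apply]
  simp only [Xh_eq, Matrix.of_apply, mul_ite, mul_one, mul_zero]
  have key : ∀ h, (g = flipOne a h) ↔ (h = flipOne a g) := fun h =>
    ⟨fun e => by rw [e, flipOne_invol], fun e => by rw [e, flipOne_invol]⟩
  simp_rw [key]
  simp

/-! ### The partial flip as a permutation matrix -/

def sflip (S : Finset (Fin 7)) (f : Fin 7 → Fin 2) : Fin 7 → Fin 2 :=
  fun j => if j ∈ S then f j + 1 else f j

lemma prod_Xh_mul (L : List (Fin 7)) (M : HexOp) :
    (L.map Xh).prod * M = Matrix.of fun f g => M (L.foldl (fun h a => flipOne a h) f) g := by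
  induction L generalizing M with
  | nil => simp; rfl
  | cons a L ih =>
      rw [List.map_cons, List.prod_cons, mul_assoc, ih, Xh_mul]
      rfl

lemma mul_prod_Xh (L : List (Fin 7)) (M : HexOp) :
    M * (L.map Xh).prod = Matrix.of fun f g => M f (L.foldr flipOne g) := by
  induction L generalizing M with
  | nil => simp; rfl
  | cons a L ih =>
      rw [List.map_cons, List.prod_cons, ← mul_assoc, mul_Xh, ih]
      rfl

lemma foldr_not_mem (L : List (Fin 7)) (f : Fin 7 → Fin 2) (j : Fin 7) (hj : j ∉ L) :
    L.foldr flipOne f j = f j := by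
  induction L with
  | nil => rfl
  | cons a L ih =>
      simp only [List.mem_cons, not_or] at hj
      simp only [List.foldr_cons, flipOne, if_neg hj.1]
      exact ih hj.2

lemma foldr_apply (L : List (Fin 7)) (hL : L.Nodup) (f : Fin 7 → Fin 2) (j : Fin 7) :
    L.foldr flipOne f j = if j ∈ L then f j + 1 else f j := by
  induction L with
  | nil => rfl
  | cons a L ih =>
      rcases List.nodup_cons.mp hL with ⟨ha, hL'⟩
      simp only [List.foldr_cons, flipOne]
      by_cases hj : j = a
      · subst hj
        simp [foldr_not_mem L f j ha]
      · simp [hj, ih hL', List.mem_cons]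

lemma foldl_apply (L : List (Fin 7)) (hL : L.Nodup) (f : Fin 7 → Fin 2) (j : Fin 7) :
    L.foldl (fun h a => flipOne a h) f j = if j ∈ L then f j + 1 else f j := by
  induction L generalizing f with
  | nil => rfl
  | cons a L ih =>
      rcases List.nodup_cons.mp hL with ⟨ha, hL'⟩
      simp only [List.foldl_cons]
      rw [ih hL']
      by_cases hj : j = a
      · subst hj
        simp [flipOne, ha]
      · simp [flipOne, hj, List.mem_cons]

lemma nodup_filterList (S : Finset (Fin 7)) :
    ((List.finRange 7).filter (fun j => j ∈ S)).Nodup :=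
  (List.nodup_finRange 7).filter _

lemma partialFlip_conj (S : Finset (Fin 7)) (M : HexOp) :
    partialFlip S * M * partialFlip S =
      Matrix.of fun f g => M (sflip S f) (sflip S g) := by
  rw [partialFlip, mul_prod_Xh, prod_Xh_mul]
  ext f g
  simp only [Matrix.of_apply]
  congr 1
  · funext j
    rw [foldl_apply _ (nodup_filterList S), sflip]
    simp [List.mem_filter]
  · funext j
    rw [foldr_apply _ (nodup_filterList S), sflip]
    simp [List.mem_filter]

lemma sflip_invol (S : Finset (Fin 7)) (f : Fin 7 → Fin 2) : sflip S (sflip S f) = f := by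
  have h2 : ∀ x : Fin 2, x + 1 + 1 = x := by decide
  funext j
  simp only [sflip]
  split <;> simp [h2]

lemma sflip_flipOne (S : Finset (Fin 7)) (a : Fin 7) (f : Fin 7 → Fin 2) :
    sflip S (flipOne a f) = flipOne a (sflip S f) := by
  funext j
  simp only [sflip, flipOne]
  split_ifs <;> rfl

lemma flip_cond (S : Finset (Fin 7)) (a : Fin 7) (f g : Fin 7 → Fin 2) :
    (sflip S g = flipOne a (sflip S f)) ↔ (g = flipOne a f) := by
  rw [← sflip_flipOne]
  constructor
  · intro h
    have h2 := congrArg (sflip S) h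
    rwa [sflip_invol, sflip_invol] at h2
  · intro h; rw [h]

/-! ### Diagonal computations -/

def theC : ℂ := (Real.pi : ℂ) * Complex.I / 2

lemma iPow_diagonal (v : (Fin 7 → Fin 2) → ℂ) :
    iPow (Matrix.diagonal v) =
      Matrix.diagonal fun f => Complex.exp (theC * v f) := by
  rw [iPow, ← Matrix.diagonal_smul, Matrix.exp_diagonal, Pi.exp_def]
  rw [← Complex.exp_eq_exp_ℂ]
  rfl

lemma prod_diagonal {α : Type*} (L : List α) (v : α → (Fin 7 → Fin 2) → ℂ) :
    (L.map fun k => Matrix.diagonal (v k)).prod =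
      Matrix.diagonal fun f => (L.map fun k => v k f).prod := by
  induction L with
  | nil => simp
  | cons a L ih =>
      simp only [List.map_cons, List.prod_cons, ih, Matrix.diagonal_mul_diagonal]

lemma prod_map_ite_filter {α : Type*} (L : List α) (p : α → Prop) [DecidablePred p]
    (e : α → ℂ) :
    (L.map fun k => if p k then e k else 1).prod =
      ((L.filter fun k => p k).map e).prod := by
  induction L with
  | nil => simp
  | cons a L ih =>
      rw [List.map_cons, List.prod_cons, ih, List.filter_cons]
      by_cases h : p a <;> simp [h]

lemma factor_diag (k : Fin 6) :
    ((2 : ℂ)⁻¹) • ((1 : HexOp) - Zh (nb k) * Zh (nb' k)) =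
      Matrix.diagonal fun f => (2 : ℂ)⁻¹ * (1 - zf (f (nb k)) * zf (f (nb' k))) := by
  rw [Zh_eq, Zh_eq, Matrix.diagonal_mul_diagonal, ← Matrix.diagonal_one,
    Matrix.diagonal_sub, ← Matrix.diagonal_smul]
  rfl

def dvec (f : Fin 7 → Fin 2) : ℂ :=
  ((List.finRange 6).map fun k =>
    Complex.exp (theC * ((2 : ℂ)⁻¹ * (1 - zf (f (nb k)) * zf (f (nb' k)))))).prod

lemma LGB_eq : LGB = -(Xh 0 * Matrix.diagonal dvec) := by
  rw [LGB]
  have h : ∀ k : Fin 6,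
      iPow (((2 : ℂ)⁻¹) • ((1 : HexOp) - Zh (nb k) * Zh (nb' k))) =
        Matrix.diagonal fun f =>
          Complex.exp (theC * ((2 : ℂ)⁻¹ * (1 - zf (f (nb k)) * zf (f (nb' k))))) :=
    fun k => by rw [factor_diag, iPow_diagonal]
  simp only [h, prod_diagonal]
  rfl

lemma deco_diag (k : Fin 6) :
    iPow (Zh (nb k) * Zh (nb' k)) =
      Matrix.diagonal fun f => Complex.exp (theC * (zf (f (nb k)) * zf (f (nb' k)))) := by
  rw [Zh_eq, Zh_eq, Matrix.diagonal_mul_diagonal, iPow_diagonal]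

def rvec (S : Finset (Fin 7)) (f : Fin 7 → Fin 2) : ℂ :=
  ((bdryEdges S).map fun k =>
    Complex.exp (theC * (zf (f (nb k)) * zf (f (nb' k))))).prod

lemma deco_eq (S : Finset (Fin 7)) :
    ((bdryEdges S).map fun k => iPow (Zh (nb k) * Zh (nb' k))).prod =
      Matrix.diagonal (rvec S) := by
  simp only [deco_diag, prod_diagonal]
  rfl

/-! ### The key scalar identity -/

lemma zf_sflip (S : Finset (Fin 7)) (g : Fin 7 → Fin 2) (j : Fin 7) :
    zf (sflip S g j) = (if j ∈ S then -1 else 1) * zf (g j) := by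
  simp only [sflip]
  by_cases h : j ∈ S <;> simp [h, zf_add_one]

lemma perk (S : Finset (Fin 7)) (g : Fin 7 → Fin 2) (k : Fin 6) :
    Complex.exp (theC * ((2 : ℂ)⁻¹ *
        (1 - zf (sflip S g (nb k)) * zf (sflip S g (nb' k))))) =
      Complex.exp (theC * ((2 : ℂ)⁻¹ * (1 - zf (g (nb k)) * zf (g (nb' k))))) *
        (if (nb k ∈ S ∧ nb' k ∉ S) ∨ (nb' k ∈ S ∧ nb k ∉ S) then
          Complex.exp (theC * (zf (g (nb k)) * zf (g (nb' k)))) else 1) := by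
  rw [zf_sflip, zf_sflip]
  by_cases h1 : nb k ∈ S <;> by_cases h2 : nb' k ∈ S
  · rw [if_pos h1, if_pos h2, if_neg (by tauto), mul_one]
    congr 1
    ring
  · rw [if_pos h1, if_neg h2, if_pos (by tauto), ← Complex.exp_add]
    congr 1
    ring
  · rw [if_neg h1, if_pos h2, if_pos (by tauto), ← Complex.exp_add]
    congr 1
    ring
  · rw [if_neg h1, if_neg h2, if_neg (by tauto), mul_one]
    congr 1
    ring

lemma dvec_sflip (S : Finset (Fin 7)) (g : Fin 7 → Fin 2) :
    dvec (sflip S g) = dvec g * rvec S g := by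
  unfold dvec rvec
  simp only [perk, List.prod_map_mul]
  congr 1
  rw [prod_map_ite_filter]
  rfl

end LGAux

/-- For any subset `S ⊆ {0,1,…,6}`, conjugating the Levin–Gu plaquette
operator by the partial spin-flip on `S` gives
`(∏_{j∈S} X_j) · B · (∏_{j∈S} X_j) = B · ∏_{k∈E_S} exp(iπ·Z_kZ_{k+1}/2)`, where `E_S` is the
set of boundary edges of the flipped region:  a spin-flip restricted to one side of a cut
decorates `B` by the product of the operators `i^{Z_kZ_{k+1}}` over the boundary edges. -/
theorem levin_gu_plaquette_partial_flip (S : Finset (Fin 7)) :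
    partialFlip S * LGB * partialFlip S =
      LGB * ((bdryEdges S).map fun k => iPow (Zh (nb k) * Zh (nb' k))).prod := by
  classical
  rw [LGAux.partialFlip_conj, LGAux.LGB_eq, LGAux.deco_eq]
  ext f g
  simp only [Matrix.of_apply, Matrix.neg_apply, Matrix.neg_mul, Matrix.mul_diagonal]
  have hX : Xh 0 (LGAux.sflip S f) (LGAux.sflip S g) = Xh 0 f g := by
    rw [LGAux.Xh_eq]
    simp only [Matrix.of_apply]
    by_cases h : g = LGAux.flipOne 0 f
    · rw [if_pos ((LGAux.flip_cond S 0 f g).mpr h), if_pos h]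
    · rw [if_neg (fun e => h ((LGAux.flip_cond S 0 f g).mp e)), if_neg h]
  rw [hX, LGAux.dvec_sflip]
  ring


end
end

section
/- For every n ≥ 1, on (ℂ²)^{⊗(n+1)} with qubits labeled 0,…,n one has the telescoping identity ∏_{k=1}^{n} exp(iπ·(1 − Z_{k−1}Z_k)/2) = Z₀ · Z_n. -/
open Complex Matrix

noncomputable section

/-- Operators on a chain of `n + 1` qubits labeled `0, …, n`. -/
abbrev ChainOp (n : ℕ) := Matrix (Fin (n + 1) → Fin 2) (Fin (n + 1) → Fin 2) ℂ

/-- Pauli `Z` on qubit `j` of the chain. -/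
def Zc (n : ℕ) (j : Fin (n + 1)) : ChainOp n := localOp j PZ

/-- Sign value of a classical bit. -/
def zv : Fin 2 → ℂ := fun i => if i = 0 then 1 else -1

lemma zv_mul_self (i : Fin 2) : zv i * zv i = 1 := by
  fin_cases i <;> simp [zv]

lemma PZ_apply (a b : Fin 2) : PZ a b = if a = b then zv a else 0 := by
  fin_cases a <;> fin_cases b <;> simp [PZ, zv]

/-- `Zc` is a diagonal matrix. -/
lemma Zc_eq_diagonal (n : ℕ) (j : Fin (n + 1)) :
    Zc n j = Matrix.diagonal (fun f => zv (f j)) := by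
  ext f g
  simp only [Zc, localOp, Matrix.of_apply, Matrix.diagonal_apply, PZ_apply]
  by_cases h : f = g
  · subst h
    simp
  · rw [if_neg h]
    by_cases h' : ∀ k, k ≠ j → f k = g k
    · rw [if_pos h', if_neg]
      intro hj
      exact h (funext fun k => by
        by_cases hk : k = j
        · subst hk; exact hj
        · exact h' k hk)
    · rw [if_neg h']

lemma list_prod_diagonal {m : Type*} [Fintype m] [DecidableEq m] {ι : Type*}
    (l : List ι) (d : ι → m → ℂ) :
    (l.map (fun k => Matrix.diagonal (d k))).prod =
      Matrix.diagonal (fun f => (l.map (fun k => d k f)).prod) := by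
  induction l with
  | nil => simp
  | cons a t ih =>
      simp only [List.map_cons, List.prod_cons, ih, Matrix.diagonal_mul_diagonal]

lemma telescope (g : ℕ → ℂ) (hg : ∀ k, g k * g k = 1) (n : ℕ) :
    ((List.range n).map (fun k => g k * g (k + 1))).prod = g 0 * g n := by
  induction n with
  | zero => simpa using (hg 0).symm
  | succ n ih =>
      rw [List.range_succ, List.map_append, List.prod_append]
      simp only [List.map_cons, List.map_nil, List.prod_cons, List.prod_nil, mul_one, ih]
      rw [mul_assoc, ← mul_assoc (g n), hg n, one_mul]

lemma exp_pi_half_two : Complex.exp ((Real.pi : ℂ) * Complex.I / 2 * (1 + 1)) = -1 := by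
  rw [show (Real.pi : ℂ) * Complex.I / 2 * (1 + 1) = Real.pi * Complex.I by ring]
  exact Complex.exp_pi_mul_I

lemma exp_entry (a b : Fin 2) :
    NormedSpace.exp ((Real.pi : ℂ) * Complex.I / 2 * (1 - zv a * zv b)) = zv a * zv b := by
  rw [← Complex.exp_eq_exp_ℂ]
  fin_cases a <;> fin_cases b <;> norm_num [zv] <;> exact exp_pi_half_two

/-- For every `n ≥ 1`, on `(ℂ²)^{⊗(n+1)}` with qubits labeled `0,…,n`,
one has the telescoping identity
`∏_{k=1}^{n} exp(iπ·(1 − Z_{k−1}Z_k)/2) = Z₀ · Z_n`. -/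
theorem telescoping_iPow_identity (n : ℕ) (hn : 1 ≤ n) :
    ((List.finRange n).map fun k =>
        NormedSpace.exp (((Real.pi : ℂ) * Complex.I / 2) •
          ((1 : ChainOp n) - Zc n k.castSucc * Zc n k.succ))).prod =
      Zc n 0 * Zc n (Fin.last n) := by
  have key : ∀ k : Fin n,
      NormedSpace.exp (((Real.pi : ℂ) * Complex.I / 2) •
          ((1 : ChainOp n) - Zc n k.castSucc * Zc n k.succ)) =
        Matrix.diagonal (fun f => zv (f k.castSucc) * zv (f k.succ)) := by
    intro k
    have harg : ((Real.pi : ℂ) * Complex.I / 2) •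
          ((1 : ChainOp n) - Zc n k.castSucc * Zc n k.succ) =
        Matrix.diagonal (fun f =>
          (Real.pi : ℂ) * Complex.I / 2 * (1 - zv (f k.castSucc) * zv (f k.succ))) := by
      rw [Zc_eq_diagonal, Zc_eq_diagonal, Matrix.diagonal_mul_diagonal]
      ext p q
      by_cases h : p = q
      · subst h
        simp [Matrix.diagonal_apply, Matrix.one_apply, smul_eq_mul]
      · simp [Matrix.diagonal_apply_ne _ h, Matrix.one_apply_ne h]
    rw [harg, Matrix.exp_diagonal, Pi.exp_def]
    exact congrArg Matrix.diagonal (funext fun f => exp_entry _ _)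
  have hmap : ((List.finRange n).map fun k =>
      NormedSpace.exp (((Real.pi : ℂ) * Complex.I / 2) •
        ((1 : ChainOp n) - Zc n k.castSucc * Zc n k.succ))) =
      (List.finRange n).map fun k =>
        Matrix.diagonal (fun f => zv (f k.castSucc) * zv (f k.succ)) :=
    List.map_congr_left fun k _ => key k
  rw [hmap, list_prod_diagonal, Zc_eq_diagonal, Zc_eq_diagonal, Matrix.diagonal_mul_diagonal]
  refine congrArg Matrix.diagonal (funext fun f => ?_)
  set g : ℕ → ℂ := fun m => zv (f ⟨m % (n + 1), Nat.mod_lt _ (Nat.succ_pos n)⟩) with hg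
  have hgsq : ∀ k, g k * g k = 1 := fun k => zv_mul_self _
  have hmap2 : ((List.finRange n).map fun k => zv (f k.castSucc) * zv (f k.succ)) =
      (List.range n).map fun k => g k * g (k + 1) := by
    rw [← List.map_coe_finRange_eq_range, List.map_map]
    apply List.map_congr_left
    intro k _
    have h1 : (⟨k.val % (n + 1), Nat.mod_lt _ (Nat.succ_pos n)⟩ : Fin (n + 1)) = k.castSucc := by
      ext
      simp [Nat.mod_eq_of_lt (Nat.lt_succ_of_lt k.isLt)]
    have h2 : (⟨(k.val + 1) % (n + 1), Nat.mod_lt _ (Nat.succ_pos n)⟩ : Fin (n + 1)) = k.succ := by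
      ext
      simp [Nat.mod_eq_of_lt (Nat.succ_lt_succ k.isLt)]
    simp only [Function.comp, hg, h1, h2]
  rw [hmap2, telescope g hgsq n]
  have h0 : (⟨0 % (n + 1), Nat.mod_lt _ (Nat.succ_pos n)⟩ : Fin (n + 1)) = 0 := by
    ext; simp
  have hn' : (⟨n % (n + 1), Nat.mod_lt _ (Nat.succ_pos n)⟩ : Fin (n + 1)) = Fin.last n := by
    ext; simp [Nat.mod_eq_of_lt (Nat.lt_succ_self n)]
  simp only [hg, h0, hn']

end
end
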